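/- Let Δ be an ordered boundary matrix over Z/2 and R = ΔV a reduction (V upper triangular with unit diagonal, lowest nonzero entries of nonzero columns in distinct rows). Then the pivot (i,j) belongs to the pivot set of R if and only if rank(Δ_i^j) − rank(Δ_{i+1}^j) − rank(Δ_i^{j-1}) + rank(Δ_{i+1}^{j-1}) = 1, where Δ_i^j denotes the lower-left submatrix consisting of rows i through n and columns 1 through j. In particular, the pivot set is the same for all reductions. -/

import Mathlib

/-- Row `i` holds the lowest nonzero entry of column `j` of `R`. -/
def IsLow {n : ℕ} (R : Matrix (Fin n) (Fin n) (ZMod 2)) (i j : Fin n) : Prop :=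
  R i j ≠ 0 ∧ ∀ i', R i' j ≠ 0 → i' ≤ i

/-- `R` is a reduction of `Δ`. -/
def IsReduction {n : ℕ} (Δ R : Matrix (Fin n) (Fin n) (ZMod 2)) : Prop :=
  ∃ V : Matrix (Fin n) (Fin n) (ZMod 2),
    (∀ i j, j < i → V i j = 0) ∧ (∀ i, V i i = 1) ∧ R = Δ * V ∧
    ∀ i j j', IsLow R i j → IsLow R i j' → j = j'

/-- Rank of the lower-left submatrix of `Δ` consisting of the rows with
(0-based) index `≥ i` and the columns with index `< j`. -/
noncomputable def lowRank {n : ℕ} (Δ : Matrix (Fin n) (Fin n) (ZMod 2))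
    (i j : ℕ) : ℕ :=
  Matrix.rank (Matrix.of fun (r : {r : Fin n // i ≤ (r : ℕ)})
    (c : {c : Fin n // (c : ℕ) < j}) => Δ r.1 c.1)

open Matrix in
open scoped Classical in
lemma exists_isLow {n : ℕ} (R : Matrix (Fin n) (Fin n) (ZMod 2)) {r c : Fin n}
    (h : R r c ≠ 0) : ∃ i₀, IsLow R i₀ c ∧ r ≤ i₀ := by
  classical
  set s := Finset.univ.filter (fun i' => R i' c ≠ 0) with hs
  have hrs : r ∈ s := by simp [hs, h]
  have hne : s.Nonempty := ⟨r, hrs⟩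
  refine ⟨s.max' hne, ⟨?_, ?_⟩, s.le_max' r hrs⟩
  · have := s.max'_mem hne
    simpa [hs] using this
  · intro i' hi'
    exact s.le_max' i' (by simp [hs, hi'])

lemma lowRank_mul {n : ℕ} (Δ V : Matrix (Fin n) (Fin n) (ZMod 2))
    (hV : ∀ i j, j < i → V i j = 0) (hVd : ∀ i, V i i = 1) (i j : ℕ) :
    lowRank (Δ * V) i j = lowRank Δ i j := by
  classical
  set A : Matrix {r : Fin n // i ≤ (r : ℕ)} {c : Fin n // (c : ℕ) < j} (ZMod 2) :=
    Matrix.of fun r c => Δ r.1 c.1 with hA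
  set V' : Matrix {c : Fin n // (c : ℕ) < j} {c : Fin n // (c : ℕ) < j} (ZMod 2) :=
    Matrix.of fun a b => V a.1 b.1 with hV'
  have hsub : (Matrix.of fun (r : {r : Fin n // i ≤ (r : ℕ)})
      (c : {c : Fin n // (c : ℕ) < j}) => (Δ * V) r.1 c.1) = A * V' := by
    ext r c
    simp only [Matrix.of_apply, Matrix.mul_apply, hA, hV']
    rw [← Finset.sum_subtype (Finset.univ.filter (fun k : Fin n => (k : ℕ) < j))
      (by simp) (fun k => Δ r.1 k * V k c.1)]
    refine (Finset.sum_subset (Finset.filter_subset _ _) ?_).symm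
    intro k _ hk
    simp only [Finset.mem_filter, Finset.mem_univ, true_and, not_lt] at hk
    have : (c.1 : ℕ) < (k : ℕ) := lt_of_lt_of_le c.2 hk
    rw [hV k c.1 this, mul_zero]
  have hbt : V'.BlockTriangular id := by
    intro a b hab
    exact hV a.1 b.1 (by exact_mod_cast hab)
  have hdet : V'.det = 1 := by
    rw [Matrix.det_of_upperTriangular hbt]
    simp [hV', hVd]
  unfold lowRank
  rw [hsub, Matrix.rank_mul_eq_left_of_isUnit_det V' A (by simp [hdet])]

open Matrix in
open scoped Classical in
lemma lowRank_eq_card {n : ℕ} (R : Matrix (Fin n) (Fin n) (ZMod 2))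
    (hd : ∀ i j j', IsLow R i j → IsLow R i j' → j = j') (i j : ℕ) :
    lowRank R i j
      = Nat.card {c : Fin n // (c : ℕ) < j ∧ ∃ i' : Fin n, i ≤ (i' : ℕ) ∧ IsLow R i' c} := by
  classical
  set ι := {c : Fin n // (c : ℕ) < j ∧ ∃ i' : Fin n, i ≤ (i' : ℕ) ∧ IsLow R i' c} with hι
  set M : Matrix {r : Fin n // i ≤ (r : ℕ)} {c : Fin n // (c : ℕ) < j} (ZMod 2) :=
    Matrix.of fun r c => R r.1 c.1 with hM
  set b : ι → ({r : Fin n // i ≤ (r : ℕ)} → ZMod 2) := fun c r => R r.1 c.1 with hb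
  have hspan : Submodule.span (ZMod 2) (Set.range Mᵀ)
      = Submodule.span (ZMod 2) (Set.range b) := by
    apply le_antisymm
    · rw [Submodule.span_le]
      rintro - ⟨c, rfl⟩
      by_cases hc : ∃ i' : Fin n, i ≤ (i' : ℕ) ∧ IsLow R i' c.1
      · exact Submodule.subset_span ⟨⟨c.1, c.2, hc⟩, rfl⟩
      · have : Mᵀ c = 0 := by
          funext r
          by_contra hne
          obtain ⟨i₀, hlow, hle⟩ := exists_isLow R (by simpa [hM] using hne)
          exact hc ⟨i₀, le_trans r.2 (Fin.le_iff_val_le_val.mp hle), hlow⟩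
        rw [this]; exact Submodule.zero_mem _
    · rw [Submodule.span_le]
      rintro - ⟨c, rfl⟩
      exact Submodule.subset_span ⟨⟨c.1, c.2.1⟩, rfl⟩
  have hli : LinearIndependent (ZMod 2) b := by
    rw [Fintype.linearIndependent_iff]
    intro g hg
    by_contra hcon
    push_neg at hcon
    obtain ⟨c₀, hc₀⟩ := hcon
    set s := Finset.univ.filter (fun c : ι => g c ≠ 0) with hs
    have hne : s.Nonempty := ⟨c₀, by simp [hs, hc₀]⟩
    set f : ι → Fin n := fun c => c.2.2.choose with hf
    have hfspec : ∀ c : ι, i ≤ ((f c : Fin n) : ℕ) ∧ IsLow R (f c) c.1 :=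
      fun c => c.2.2.choose_spec
    obtain ⟨cm, hcm, hmax⟩ := Finset.exists_max_image s f hne
    have hr₀ : i ≤ ((f cm : Fin n) : ℕ) := (hfspec cm).1
    have heval := congrFun hg ⟨f cm, hr₀⟩
    simp only [Finset.sum_apply, Pi.smul_apply, smul_eq_mul, Pi.zero_apply] at heval
    have hsum : ∑ c : ι, g c * b c ⟨f cm, hr₀⟩ = g cm * b cm ⟨f cm, hr₀⟩ := by
      apply Finset.sum_eq_single
      · intro c _ hcne
        by_cases hgc : g c = 0
        · rw [hgc, zero_mul]
        · have hcs : c ∈ s := by simp [hs, hgc]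
          have hRz : R (f cm) c.1 = 0 := by
            by_contra hRne
            have h1 : f cm ≤ f c := (hfspec c).2.2 _ hRne
            have h2 : f c ≤ f cm := hmax c hcs
            have heq : f c = f cm := le_antisymm h2 h1
            have : c.1 = cm.1 := by
              apply hd (f cm) _ _ _ (hfspec cm).2
              rw [← heq]; exact (hfspec c).2
            exact hcne (Subtype.ext this)
          simp [hb, hRz]
      · intro h
        exact absurd (Finset.mem_univ cm) h
    rw [hsum] at heval
    have hRcm : R (f cm) cm.1 ≠ 0 := (hfspec cm).2.1
    have hgcm : g cm ≠ 0 := by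
      have := Finset.mem_filter.mp hcm
      exact this.2
    have hor : g cm = 0 ∨ R (f cm) cm.1 = 0 := by simpa [hb] using heval
    rcases hor with h | h
    · exact hgcm h
    · exact hRcm h
  have hcard := finrank_span_eq_card hli
  rw [lowRank]
  rw [Matrix.rank_eq_finrank_span_cols]
  rw [show (Matrix.of fun (r : {r : Fin n // i ≤ (r : ℕ)})
    (c : {c : Fin n // (c : ℕ) < j}) => R r.1 c.1) = M from rfl]
  rw [show Set.range M.col = Set.range Mᵀ from rfl]
  rw [hspan, hcard, Nat.card_eq_fintype_card]

open scoped Classical in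
lemma card_split {n : ℕ} (R : Matrix (Fin n) (Fin n) (ZMod 2)) (i : ℕ) (j : Fin n) :
    Nat.card {c : Fin n // (c : ℕ) < (j : ℕ) + 1 ∧ ∃ i' : Fin n, i ≤ (i' : ℕ) ∧ IsLow R i' c}
      = Nat.card {c : Fin n // (c : ℕ) < (j : ℕ) ∧ ∃ i' : Fin n, i ≤ (i' : ℕ) ∧ IsLow R i' c}
        + (if ∃ i' : Fin n, i ≤ (i' : ℕ) ∧ IsLow R i' j then 1 else 0) := by
  classical
  simp only [Nat.card_eq_fintype_card, Fintype.card_subtype]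
  set E : Fin n → Prop := fun c => ∃ i' : Fin n, i ≤ (i' : ℕ) ∧ IsLow R i' c with hE
  have hsplit : (Finset.univ.filter (fun c : Fin n => (c : ℕ) < (j : ℕ) + 1 ∧ E c))
      = Finset.univ.filter (fun c : Fin n => (c : ℕ) < (j : ℕ) ∧ E c)
        ∪ Finset.univ.filter (fun c : Fin n => c = j ∧ E c) := by
    rw [← Finset.filter_or]
    apply Finset.filter_congr
    intro c _
    constructor
    · rintro ⟨hlt, hEc⟩
      rcases Nat.lt_succ_iff_lt_or_eq.mp hlt with h | h
      · exact Or.inl ⟨h, hEc⟩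
      · exact Or.inr ⟨Fin.ext h, hEc⟩
    · rintro (⟨hlt, hEc⟩ | ⟨rfl, hEc⟩)
      · exact ⟨hlt.trans (Nat.lt_succ_self _), hEc⟩
      · exact ⟨Nat.lt_succ_self _, hEc⟩
  have hdisj : Disjoint (Finset.univ.filter (fun c : Fin n => (c : ℕ) < (j : ℕ) ∧ E c))
      (Finset.univ.filter (fun c : Fin n => c = j ∧ E c)) := by
    rw [Finset.disjoint_filter]
    rintro c _ ⟨hlt, -⟩ ⟨rfl, -⟩
    exact lt_irrefl _ hlt
  have hsec : (Finset.univ.filter (fun c : Fin n => c = j ∧ E c)).card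
      = if E j then 1 else 0 := by
    split_ifs with h
    · rw [show Finset.univ.filter (fun c : Fin n => c = j ∧ E c) = {j} by
        ext c; simp only [Finset.mem_filter, Finset.mem_univ, true_and, Finset.mem_singleton]
        constructor
        · rintro ⟨rfl, -⟩; rfl
        · rintro rfl; exact ⟨rfl, h⟩]
      simp
    · rw [show Finset.univ.filter (fun c : Fin n => c = j ∧ E c) = ∅ by
        ext c; simp only [Finset.mem_filter, Finset.mem_univ, true_and,
          Finset.notMem_empty, iff_false]
        rintro ⟨rfl, hEc⟩; exact h hEc]
      simp
  rw [hsplit, Finset.card_union_of_disjoint hdisj, hsec]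

open scoped Classical in
lemma key {n : ℕ} (Δ R : Matrix (Fin n) (Fin n) (ZMod 2))
    (hR : IsReduction Δ R) (i j : Fin n) :
    IsLow R i j ↔
      (lowRank Δ (i : ℕ) ((j : ℕ) + 1) : ℤ)
        - lowRank Δ ((i : ℕ) + 1) ((j : ℕ) + 1)
        - lowRank Δ (i : ℕ) (j : ℕ)
        + lowRank Δ ((i : ℕ) + 1) (j : ℕ) = 1 := by
  classical
  obtain ⟨V, hV, hVd, hRV, hd⟩ := hR
  have hlr : ∀ a b : ℕ, lowRank Δ a b = lowRank R a b := by
    intro a b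
    rw [hRV, lowRank_mul Δ V hV hVd]
  have hcnt : ∀ a b : ℕ, lowRank R a b
      = Nat.card {c : Fin n // (c : ℕ) < b ∧ ∃ i' : Fin n, a ≤ (i' : ℕ) ∧ IsLow R i' c} :=
    lowRank_eq_card R hd
  rw [hlr, hlr, hlr, hlr, hcnt, hcnt, hcnt, hcnt,
    show Nat.card {c : Fin n // (c : ℕ) < (j : ℕ) + 1 ∧ ∃ i' : Fin n, (i : ℕ) ≤ (i' : ℕ) ∧ IsLow R i' c}
      = Nat.card {c : Fin n // (c : ℕ) < (j : ℕ) ∧ ∃ i' : Fin n, (i : ℕ) ≤ (i' : ℕ) ∧ IsLow R i' c}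
        + (if ∃ i' : Fin n, (i : ℕ) ≤ (i' : ℕ) ∧ IsLow R i' j then 1 else 0) from card_split R _ j,
    show Nat.card {c : Fin n // (c : ℕ) < (j : ℕ) + 1 ∧ ∃ i' : Fin n, (i : ℕ) + 1 ≤ (i' : ℕ) ∧ IsLow R i' c}
      = Nat.card {c : Fin n // (c : ℕ) < (j : ℕ) ∧ ∃ i' : Fin n, (i : ℕ) + 1 ≤ (i' : ℕ) ∧ IsLow R i' c}
        + (if ∃ i' : Fin n, (i : ℕ) + 1 ≤ (i' : ℕ) ∧ IsLow R i' j then 1 else 0) from card_split R _ j]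
  set E1 : Prop := ∃ i' : Fin n, (i : ℕ) ≤ (i' : ℕ) ∧ IsLow R i' j with hE1
  set E2 : Prop := ∃ i' : Fin n, (i : ℕ) + 1 ≤ (i' : ℕ) ∧ IsLow R i' j with hE2
  have harith : ∀ (a b : ℕ) (x y : ℕ),
      ((a + x : ℕ) : ℤ) - ((b + y : ℕ) : ℤ) - (a : ℤ) + (b : ℤ) = (x : ℤ) - y := by
    intro a b x y; push_cast; ring
  rw [harith]
  constructor
  · intro hlow
    have hE1t : E1 := ⟨i, le_refl _, hlow⟩
    have hE2f : ¬ E2 := by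
      rintro ⟨i'', hle, hlow''⟩
      have := hlow.2 i'' hlow''.1
      have : (i'' : ℕ) ≤ (i : ℕ) := Fin.le_iff_val_le_val.mp this
      omega
    rw [if_pos hE1t, if_neg hE2f]
    ring
  · intro heq
    by_cases h2 : E2
    · have h1 : E1 := by
        obtain ⟨i'', hle, hl⟩ := h2
        exact ⟨i'', by omega, hl⟩
      rw [if_pos h1, if_pos h2] at heq
      norm_num at heq
    · by_cases h1 : E1
      · obtain ⟨i', hle, hl⟩ := h1
        have : (i' : ℕ) < (i : ℕ) + 1 := by
          by_contra hc
          exact h2 ⟨i', by omega, hl⟩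
        have : i' = i := Fin.ext (by omega)
        rwa [this] at hl
      · rw [if_neg h1, if_neg h2] at heq
        norm_num at heq

/-- `(i,j)` is a pivot of a reduction of `Δ` iff the alternating sum of ranks of
the four lower-left submatrices delimited by row `i` and column `j` equals `1`.
In particular, the pivot set is the same for all reductions. -/
theorem stmt5 {n : ℕ} (Δ R : Matrix (Fin n) (Fin n) (ZMod 2))
    (hR : IsReduction Δ R) (i j : Fin n) :
    (IsLow R i j ↔
      (lowRank Δ (i : ℕ) ((j : ℕ) + 1) : ℤ)
        - lowRank Δ ((i : ℕ) + 1) ((j : ℕ) + 1)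
        - lowRank Δ (i : ℕ) (j : ℕ)
        + lowRank Δ ((i : ℕ) + 1) (j : ℕ) = 1) ∧
    (∀ R', IsReduction Δ R' → (IsLow R i j ↔ IsLow R' i j)) := by
  refine ⟨key Δ R hR i j, fun R' hR' => (key Δ R hR i j).trans (key Δ R' hR' i j).symm⟩
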